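/- Let i < j < k be integers in Z_{2^n} such that (NOT i) AND j AND k = 0 (bitwise on n-bit expansions). Then mu_i(j,k) := ((NOT i) AND (j OR k)) OR (j AND k) satisfies mu_i(j,k) > k. -/

import Mathlib

/-- Extract the most significant differing bit of `a < b`. -/
lemma msb_diff {a b : ℕ} (h : a < b) :
    ∃ t, a.testBit t = false ∧ b.testBit t = true ∧
      ∀ s, t < s → a.testBit s = b.testBit s := by
  have hd : a ^^^ b ≠ 0 := by
    intro h0
    exact absurd (xor_eq_zero_iff.mp h0) (Nat.ne_of_lt h)
  obtain ⟨t, ht, hts⟩ := Nat.exists_most_significant_bit hd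
  have hne : a.testBit t ≠ b.testBit t := by
    simpa [Nat.testBit_xor] using ht
  have heq : ∀ s, t < s → a.testBit s = b.testBit s := by
    intro s hs
    have := hts s hs
    simpa [Nat.testBit_xor] using this
  cases ha : a.testBit t with
  | false =>
    refine ⟨t, ha, ?_, heq⟩
    cases hb : b.testBit t with
    | false => exact absurd (ha.trans hb.symm) hne
    | true => rfl
  | true =>
    cases hb : b.testBit t with
    | true => exact absurd (ha.trans hb.symm) hne
    | false =>
      exact absurd (Nat.lt_of_testBit t hb ha fun s hs => (heq s hs).symm)
        (Nat.lt_asymm h)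
      
/-- If `a` is bitwise below `b` from bit `t` up, with strictness at `t`, then `a < b`. -/
lemma lt_of_bitwise_le {a b t : ℕ} (ht : a.testBit t = false) (hbt : b.testBit t = true)
    (hle : ∀ s, t < s → a.testBit s = true → b.testBit s = true) : a < b := by
  have hand : (a >>> t) &&& (b >>> t) = a >>> t := by
    apply Nat.eq_of_testBit_eq
    intro s
    rw [Nat.testBit_and, Nat.testBit_shiftRight, Nat.testBit_shiftRight]
    cases hs : a.testBit (t + s) with
    | false => simp
    | true =>
      rcases Nat.eq_zero_or_pos s with rfl | hpos
      · exact absurd hs (by simpa using ht)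
      · rw [hle (t + s) (by omega) hs]; simp
  have hle' : a >>> t ≤ b >>> t := hand ▸ Nat.and_le_right
  have hne' : a >>> t ≠ b >>> t := by
    intro hEq
    have h0 : (a >>> t).testBit 0 = (b >>> t).testBit 0 := by rw [hEq]
    rw [Nat.testBit_shiftRight, Nat.testBit_shiftRight] at h0
    simp only [Nat.add_zero] at h0
    rw [ht, hbt] at h0
    exact Bool.false_ne_true h0
  have hlt : a >>> t < b >>> t := lt_of_le_of_ne hle' hne'
  rw [Nat.shiftRight_eq_div_pow, Nat.shiftRight_eq_div_pow] at hlt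
  exact Nat.lt_of_div_lt_div hlt

theorem mu_gt (n i j k : ℕ) (hk : k < 2 ^ n) (hij : i < j) (hjk : j < k)
    (h : ((2 ^ n - 1) ^^^ i) &&& j &&& k = 0) :
    (((2 ^ n - 1) ^^^ i) &&& (j ||| k)) ||| (j &&& k) > k := by
  set M := (2 ^ n - 1) ^^^ i with hM
  set mu := (M &&& (j ||| k)) ||| (j &&& k) with hmu
  -- basic facts about bits above n
  have hklt : ∀ s, k.testBit s = true → s < n := by
    intro s hs
    by_contra hns
    have : k < 2 ^ s := lt_of_lt_of_le hk (Nat.pow_le_pow_right (by norm_num) (by omega))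
    rw [Nat.testBit_lt_two_pow this] at hs
    exact Bool.false_ne_true hs
  have hjlt : ∀ s, j.testBit s = true → s < n := by
    intro s hs
    by_contra hns
    have : j < 2 ^ s :=
      lt_of_lt_of_le (lt_trans hjk hk) (Nat.pow_le_pow_right (by norm_num) (by omega))
    rw [Nat.testBit_lt_two_pow this] at hs
    exact Bool.false_ne_true hs
  -- M's bits below n
  have hMbit : ∀ s, s < n → M.testBit s = !(i.testBit s) := by
    intro s hs
    rw [hM, Nat.testBit_xor, Nat.testBit_two_pow_sub_one]
    simp [hs]
  -- bit form of hypothesis h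
  have hcond : ∀ s, j.testBit s = true → k.testBit s = true → i.testBit s = true := by
    intro s hjs hks
    have hsn : s < n := hjlt s hjs
    have := congrArg (fun x => x.testBit s) h
    simp only [Nat.testBit_and, Nat.zero_testBit] at this
    rw [hMbit s hsn, hjs, hks] at this
    simpa using this
  -- mu's bits
  have hmubit : ∀ s, mu.testBit s =
      ((M.testBit s && (j.testBit s || k.testBit s)) || (j.testBit s && k.testBit s)) := by
    intro s
    rw [hmu]
    simp [Nat.testBit_or, Nat.testBit_and]
  rcases lt_trichotomy k mu with hlt | heq | hgt
  · exact hlt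
  · -- mu = k : contradiction using i < j and h
    obtain ⟨t, hit, hjt, habove⟩ := msb_diff hij
    have htn : t < n := hjlt t hjt
    have hkt : k.testBit t = false := by
      cases hkt : k.testBit t with
      | false => rfl
      | true =>
        have := hcond t hjt hkt
        rw [hit] at this
        exact absurd this Bool.false_ne_true
    have hmut : mu.testBit t = true := by
      rw [hmubit, hMbit t htn, hit, hjt, hkt]
      rfl
    rw [← heq, hkt] at hmut
    exact absurd hmut Bool.false_ne_true
  · -- mu < k : contradiction, derive j < i
    exfalso
    obtain ⟨t, hmut, hkt, habove⟩ := msb_diff hgt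
    have htn : t < n := hklt t hkt
    rw [hmubit, hkt] at hmut
    simp only [Bool.or_true, Bool.and_true] at hmut
    have hMt : M.testBit t = false := by
      cases hx : M.testBit t with
      | false => rfl
      | true => rw [hx] at hmut; simp at hmut
    have hjt : j.testBit t = false := by
      cases hx : j.testBit t with
      | false => rfl
      | true => rw [hx] at hmut; simp at hmut
    have hit : i.testBit t = true := by
      have := hMbit t htn
      rw [hMt] at this
      simpa using this.symm
    have hji : j < i := by
      apply lt_of_bitwise_le hjt hit
      intro s hs hjs
      have hsn : s < n := hjlt s hjs
      cases hks : k.testBit s with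
      | true => exact hcond s hjs hks
      | false =>
        have hmus : mu.testBit s = false := by rw [habove s hs, hks]
        rw [hmubit, hjs, hks] at hmus
        simp only [Bool.or_false, Bool.and_true, Bool.and_false] at hmus
        have := hMbit s hsn
        rw [hmus] at this
        simpa using this.symm
    exact absurd hij (Nat.lt_asymm hji)
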